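/- arXiv:2404.17711 — 5 statements merged into one kernel-verified Lean document; each statement's English description precedes it below -/
import Mathlib

section
/- Let x > 0, y ≥ 0 with (x−1)² + y² ≤ 1, and let d = (x²+y²)/(2x). Then d ≤ 1, and for all t with 0 ≤ t ≤ 1, √((x−d)²+y²) + d + 1 − 2t ≤ √((x−1)²+y²) + 2 − 2t. -/
theorem stmt_2 (x y : ℝ) (hx : 0 < x) (hy : 0 ≤ y)
    (hD : (x - 1)^2 + y^2 ≤ 1) :
    (x^2 + y^2) / (2*x) ≤ 1 ∧
    ∀ t : ℝ, 0 ≤ t → t ≤ 1 →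
      Real.sqrt ((x - (x^2 + y^2) / (2*x))^2 + y^2) + (x^2 + y^2) / (2*x) + 1 - 2*t ≤
      Real.sqrt ((x - 1)^2 + y^2) + 2 - 2*t := by
  set d : ℝ := (x^2 + y^2) / (2*x) with hd
  have hx2 : (0:ℝ) < 2*x := by linarith
  have hd0 : 0 ≤ d := by positivity
  have hdx : 2 * x * d = x^2 + y^2 := by
    rw [hd]; field_simp
  have hd1 : d ≤ 1 := by
    rw [hd, div_le_one hx2]; nlinarith
  refine ⟨hd1, fun t ht0 ht1 => ?_⟩
  have hsq : (x - d)^2 + y^2 = d^2 := by nlinarith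
  have h1 : Real.sqrt ((x - d)^2 + y^2) = d := by
    rw [hsq, Real.sqrt_sq hd0]
  rw [h1]
  have key : 2*d ≤ Real.sqrt ((x-1)^2 + y^2) + 1 := by
    rcases le_or_gt (2*d) 1 with h | h
    · have := Real.sqrt_nonneg ((x-1)^2 + y^2); linarith
    · have h2 : (2*d - 1)^2 ≤ (x-1)^2 + y^2 := by nlinarith
      have := Real.sqrt_le_sqrt h2
      rw [Real.sqrt_sq (by linarith)] at this
      linarith
  linarith
end

section
/- For real x, y with y ≥ 0, sup over t ∈ [0,1] of (1+√(x²+y²)) / max{1, √((x−t)²+y²)+1−t} equals (1+√(x²+y²)) / max{1, √((x−1)²+y²)}. -/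
theorem stmt_5 (x y : ℝ) (hy : 0 ≤ y) :
    sSup ((fun t : ℝ =>
        (1 + Real.sqrt (x^2 + y^2)) / max 1 (Real.sqrt ((x - t)^2 + y^2) + 1 - t)) ''
      Set.Icc (0:ℝ) 1) =
    (1 + Real.sqrt (x^2 + y^2)) / max 1 (Real.sqrt ((x - 1)^2 + y^2)) := by
  apply IsGreatest.csSup_eq
  constructor
  · refine ⟨1, by norm_num, ?_⟩
    simp only []
    norm_num
  · rintro a ⟨t, ⟨ht0, ht1⟩, rfl⟩
    simp only []
    have hN : (0:ℝ) ≤ 1 + Real.sqrt (x^2 + y^2) := by positivity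
    have hden1 : (0:ℝ) < max 1 (Real.sqrt ((x - 1)^2 + y^2)) := lt_max_of_lt_left one_pos
    apply div_le_div_of_nonneg_left hN hden1
    -- need : max 1 (√((x-1)²+y²)) ≤ max 1 (√((x-t)²+y²)+1-t)
    have hu : (0:ℝ) ≤ Real.sqrt ((x - t)^2 + y^2) := Real.sqrt_nonneg _
    have hu2 : Real.sqrt ((x - t)^2 + y^2) ^ 2 = (x - t)^2 + y^2 :=
      Real.sq_sqrt (by positivity)
    have habs : |x - t| ≤ Real.sqrt ((x - t)^2 + y^2) := by
      rw [← Real.sqrt_sq_eq_abs]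
      exact Real.sqrt_le_sqrt (by nlinarith)
    have hkey : Real.sqrt ((x - 1)^2 + y^2) ≤ Real.sqrt ((x - t)^2 + y^2) + 1 - t := by
      have hc : (0:ℝ) ≤ Real.sqrt ((x - t)^2 + y^2) + (1 - t) := by linarith
      have : Real.sqrt ((x - 1)^2 + y^2) ≤ Real.sqrt ((x - t)^2 + y^2) + (1 - t) := by
        have h2 : (x - 1)^2 + y^2 ≤ (Real.sqrt ((x - t)^2 + y^2) + (1 - t))^2 := by
          have h3 : -(x - t) ≤ Real.sqrt ((x - t)^2 + y^2) := (neg_le_abs _).trans habs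
          nlinarith [neg_abs_le (x - t)]
        calc Real.sqrt ((x - 1)^2 + y^2)
            ≤ Real.sqrt ((Real.sqrt ((x - t)^2 + y^2) + (1 - t))^2) := Real.sqrt_le_sqrt h2
          _ = Real.sqrt ((x - t)^2 + y^2) + (1 - t) := Real.sqrt_sq hc
      linarith
    exact max_le_max le_rfl hkey
end

section
/- Let x, y > 0 and set t' = (x(x−1)+y²)/(2(x+√x)). Then √((x−t')²+y²) + 3 − t' = 3 + √x, i.e., √((x−t')²+y²) = √x + t'. -/
theorem stmt_10 (x y : ℝ) (hx : 0 < x) (hy : 0 < y) :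
    Real.sqrt ((x - (x*(x-1) + y^2) / (2*(x + Real.sqrt x)))^2 + y^2)
      + 3 - (x*(x-1) + y^2) / (2*(x + Real.sqrt x)) = 3 + Real.sqrt x ∧
    Real.sqrt ((x - (x*(x-1) + y^2) / (2*(x + Real.sqrt x)))^2 + y^2) =
      Real.sqrt x + (x*(x-1) + y^2) / (2*(x + Real.sqrt x)) := by
  set s := Real.sqrt x with hs
  have hs0 : 0 < s := Real.sqrt_pos.mpr hx
  have hsq : s ^ 2 = x := Real.sq_sqrt hx.le
  have hden : (0:ℝ) < 2 * (x + s) := by positivity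
  set t := (x*(x-1) + y^2) / (2*(x + s)) with ht
  have h2 : t * (2*(x+s)) = x*(x-1) + y^2 := by
    rw [ht]; field_simp
  have hst : s + t = ((x + s)^2 + y^2) / (2*(x + s)) := by
    rw [eq_div_iff hden.ne']
    nlinarith [hsq, h2]
  have hst0 : 0 ≤ s + t := by
    rw [hst]; positivity
  have key : Real.sqrt ((x - t)^2 + y^2) = s + t := by
    have : (x - t)^2 + y^2 = (s + t)^2 := by
      nlinarith [hsq, h2]
    rw [this, Real.sqrt_sq hst0]
  exact ⟨by rw [key]; ring, key⟩
end

section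
/- Let x, y > 0 with (x−1)² + y² ≤ 1 and x² + y² > x. Then (3+√x)/(√(x²+y²)+1) ≥ 1 + y²/(x(√x+1)²). -/
theorem stmt_12 (x y : ℝ) (hx : 0 < x) (hy : 0 < y)
    (hD : (x - 1)^2 + y^2 ≤ 1) (hout : x < x^2 + y^2) :
    1 + y^2 / (x * (Real.sqrt x + 1)^2) ≤
      (3 + Real.sqrt x) / (Real.sqrt (x^2 + y^2) + 1) := by
  set s := Real.sqrt x with hs
  set r := Real.sqrt (x^2 + y^2) with hr
  have hs0 : 0 < s := Real.sqrt_pos.2 hx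
  have hs2 : s^2 = x := Real.sq_sqrt hx.le
  have hr0 : 0 ≤ r := Real.sqrt_nonneg _
  have hr2 : r^2 = x^2 + y^2 := Real.sq_sqrt (by positivity)
  have hr2' : r^2 ≤ 2*x := by nlinarith
  have hD0 : (0:ℝ) < x * (s+1)^2 := by positivity
  have hR0 : (0:ℝ) < r + 1 := by linarith
  rw [add_div' _ _ _ hD0.ne', div_le_div_iff₀ hD0 hR0]
  nlinarith [mul_pos hs0 hs0, sq_nonneg (r - s), sq_nonneg (s+1), mul_nonneg (mul_nonneg hr0 hr0) hr0, mul_nonneg (sub_nonneg.2 hr2') hr0, mul_nonneg (sub_nonneg.2 hr2') hs0.le, mul_pos (mul_pos hs0 hs0) hs0]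
end

section
/- Let x, y ≥ 0 with (x−1)² + y² ≥ 1. Then for all t ∈ [0,1], (√((x−1)²+y²) + 2(1−t)) / (√((x−t)²+y²) + 1 − t) ≤ 3. -/
theorem stmt_17 (x y : ℝ) (hy : 0 ≤ y) (hD : 1 ≤ (x - 1)^2 + y^2) :
    ∀ t : ℝ, 0 ≤ t → t ≤ 1 →
      (Real.sqrt ((x - 1)^2 + y^2) + 2*(1 - t)) /
        (Real.sqrt ((x - t)^2 + y^2) + 1 - t) ≤ 3 := by
  intro t ht0 ht1
  set a := Real.sqrt ((x - t)^2 + y^2) with ha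
  set b := Real.sqrt ((x - 1)^2 + y^2) with hb
  have ha0 : 0 ≤ a := Real.sqrt_nonneg _
  have ha2 : a^2 = (x - t)^2 + y^2 := Real.sq_sqrt (by positivity)
  have hb2 : b^2 = (x - 1)^2 + y^2 := Real.sq_sqrt (by positivity)
  have hb0 : 0 ≤ b := Real.sqrt_nonneg _
  have haxt : |x - t| ≤ a := by
    rw [ha]
    rw [← Real.sqrt_sq_eq_abs]
    exact Real.sqrt_le_sqrt (by nlinarith [sq_nonneg y])
  have haxt' : -(x - t) ≤ a := (neg_le_abs _).trans haxt
  -- triangle inequality: b ≤ a + (1 - t)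
  have htri : b ≤ a + (1 - t) := by
    have hrt : 0 ≤ a + (1 - t) := by linarith
    nlinarith [sq_nonneg (b - (a + (1 - t)))]
  have hb1 : 1 ≤ b := by
    nlinarith
  have hden : 1 ≤ a + 1 - t := by
    nlinarith
  rw [div_le_iff₀ (by linarith)]
  nlinarith
end
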